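/- The following matrix identity holds: ((B 1 1)⁻¹ − (B 1 2)⁻¹)⁻¹ + ((B 1 2)⁻¹ − (B 1 3)⁻¹)⁻¹ = t_1 t_2⁻ᵀ x_3⁻¹ t_2⁻¹ t_1ᵀ. (In the paper's notation this is F_1(x_1,x_2,x_3) = π(x_1)π^{*−1}(x_2)π^{*−1}(x_3)(e).) -/
import Mathlib

open Matrix

lemma inv_neg_mat {n : ℕ} (M : Matrix (Fin n) (Fin n) ℝ) (h : IsUnit M.det) :
    (-M)⁻¹ = -(M⁻¹) :=
  Matrix.inv_eq_right_inv (by rw [neg_mul_neg, Matrix.mul_nonsing_inv _ h])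

/-- `F₁(x₁,x₂,x₃) = π(x₁)π^{*−1}(x₂)π^{*−1}(x₃)(e)`, i.e.
`((B 1 1)⁻¹ − (B 1 2)⁻¹)⁻¹ + ((B 1 2)⁻¹ − (B 1 3)⁻¹)⁻¹ = t₁ t₂⁻ᵀ x₃⁻¹ t₂⁻¹ t₁ᵀ`. -/
theorem F_one_eq
    (n : ℕ) (hn : 1 ≤ n)
    (t : ℕ → Matrix (Fin n) (Fin n) ℝ)
    (ht_lower : ∀ j, 1 ≤ j → ∀ i k : Fin n, i < k → t j i k = 0)
    (ht_diag : ∀ j, 1 ≤ j → ∀ i : Fin n, 0 < t j i i)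
    (x : ℕ → Matrix (Fin n) (Fin n) ℝ)
    (hx : ∀ j, 1 ≤ j → x j = t j * (t j)ᵀ)
    (B : ℕ → ℕ → Matrix (Fin n) (Fin n) ℝ)
    (hB_diag : ∀ k, 1 ≤ k → B k k = x k)
    (hB_rec : ∀ j k, 1 ≤ j → j < k → B j k = t j * (1 + B (j+1) k)⁻¹ * (t j)ᵀ) :
    ((B 1 1)⁻¹ - (B 1 2)⁻¹)⁻¹ + ((B 1 2)⁻¹ - (B 1 3)⁻¹)⁻¹
      = t 1 * ((t 2)ᵀ)⁻¹ * (x 3)⁻¹ * (t 2)⁻¹ * (t 1)ᵀ := by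
  -- invertibility of the triangular factors
  have hdet : ∀ j, 1 ≤ j → IsUnit (t j).det := by
    intro j hj
    rw [Matrix.det_of_lowerTriangular (t j)
      (fun i k hik => ht_lower j hj i k (by simpa using hik))]
    exact (Finset.prod_pos (fun i _ => ht_diag j hj i)).ne'.isUnit
  have hdetT : ∀ j, 1 ≤ j → IsUnit ((t j)ᵀ).det := by
    intro j hj; rw [Matrix.det_transpose]; exact hdet j hj
  have hct : ∀ A : Matrix (Fin n) (Fin n) ℝ, Aᴴ = Aᵀ := fun A =>
    Matrix.conjTranspose_eq_transpose_of_trivial A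
  -- positive semidefiniteness of the x's
  have hpsd : ∀ j, 1 ≤ j → (x j).PosSemidef := by
    intro j hj
    rw [hx j hj, ← hct]
    exact Matrix.posSemidef_self_mul_conjTranspose (t j)
  have hdetx : ∀ j, 1 ≤ j → IsUnit (x j).det := by
    intro j hj
    rw [hx j hj, Matrix.det_mul]
    exact (hdet j hj).mul (hdetT j hj)
  -- abbreviations
  set u := t 1 with hu
  set v := t 2 with hv
  set C := 1 + x 3 with hCdef
  set D := 1 + v * C⁻¹ * vᵀ with hDdef
  -- positive definite matrices
  have hA : (1 + x 2).PosDef :=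
    Matrix.PosDef.add_posSemidef Matrix.PosDef.one (hpsd 2 (by norm_num))
  have hC : C.PosDef :=
    Matrix.PosDef.add_posSemidef Matrix.PosDef.one (hpsd 3 (by norm_num))
  have hD : D.PosDef := by
    refine Matrix.PosDef.add_posSemidef Matrix.PosDef.one ?_
    have := hC.inv.posSemidef.mul_mul_conjTranspose_same v
    rwa [hct] at this
  have hAd : IsUnit (1 + x 2).det := (Matrix.isUnit_iff_isUnit_det _).1 hA.isUnit
  have hCd : IsUnit C.det := (Matrix.isUnit_iff_isUnit_det _).1 hC.isUnit
  have hDd : IsUnit D.det := (Matrix.isUnit_iff_isUnit_det _).1 hD.isUnit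
  -- sandwich inverse lemmas
  have sandw1 : ∀ M : Matrix (Fin n) (Fin n) ℝ,
      (u * M * uᵀ)⁻¹ = (uᵀ)⁻¹ * M⁻¹ * u⁻¹ := by
    intro M
    rw [Matrix.mul_inv_rev, Matrix.mul_inv_rev, Matrix.mul_assoc]
  have sandw2 : ∀ M : Matrix (Fin n) (Fin n) ℝ,
      ((uᵀ)⁻¹ * M * u⁻¹)⁻¹ = u * M⁻¹ * uᵀ := by
    intro M
    rw [Matrix.mul_inv_rev, Matrix.mul_inv_rev,
      Matrix.nonsing_inv_nonsing_inv _ (hdet 1 le_rfl),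
      Matrix.nonsing_inv_nonsing_inv _ (hdetT 1 le_rfl), Matrix.mul_assoc]
  -- explicit formulas for the B's and their inverses
  have iB11 : (B 1 1)⁻¹ = (uᵀ)⁻¹ * 1 * u⁻¹ := by
    rw [hB_diag 1 le_rfl, hx 1 le_rfl, show u * uᵀ = u * 1 * uᵀ by rw [mul_one],
      sandw1, inv_one]
  have iB12 : (B 1 2)⁻¹ = (uᵀ)⁻¹ * (1 + x 2) * u⁻¹ := by
    rw [hB_rec 1 2 le_rfl (by norm_num), hB_diag 2 (by norm_num), sandw1,
      Matrix.nonsing_inv_nonsing_inv _ hAd]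
  have iB13 : (B 1 3)⁻¹ = (uᵀ)⁻¹ * D * u⁻¹ := by
    rw [hB_rec 1 3 le_rfl (by norm_num), hB_rec 2 3 (by norm_num) (by norm_num),
      hB_diag 3 (by norm_num), ← hCdef, ← hv, ← hDdef, sandw1,
      Matrix.nonsing_inv_nonsing_inv _ hDd]
  -- first term
  have hdiff1 : (B 1 1)⁻¹ - (B 1 2)⁻¹ = (uᵀ)⁻¹ * (-(x 2)) * u⁻¹ := by
    rw [iB11, iB12, ← Matrix.sub_mul, ← Matrix.mul_sub]
    congr 2
    abel
  have hterm1 : ((B 1 1)⁻¹ - (B 1 2)⁻¹)⁻¹ = u * (-(x 2)⁻¹) * uᵀ := by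
    rw [hdiff1, sandw2, inv_neg_mat _ (hdetx 2 (by norm_num))]
  -- second term
  have hfac : (1 + x 2) - D = v * (C⁻¹ * x 3) * vᵀ := by
    have h1 : C⁻¹ * x 3 = 1 - C⁻¹ := by
      have : C⁻¹ * x 3 = C⁻¹ * (C - 1) := by rw [hCdef]; congr 1; abel
      rw [this, Matrix.mul_sub, Matrix.nonsing_inv_mul _ hCd, mul_one]
    rw [h1, Matrix.mul_sub, Matrix.sub_mul, mul_one, hDdef, hx 2 (by norm_num), ← hv]
    abel
  have hdiff2 : (B 1 2)⁻¹ - (B 1 3)⁻¹ = (uᵀ)⁻¹ * (v * (C⁻¹ * x 3) * vᵀ) * u⁻¹ := by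
    rw [iB12, iB13, ← Matrix.sub_mul, ← Matrix.mul_sub, hfac]
  have hinner : (v * (C⁻¹ * x 3) * vᵀ)⁻¹ = (vᵀ)⁻¹ * (x 3)⁻¹ * C * v⁻¹ := by
    rw [Matrix.mul_inv_rev, Matrix.mul_inv_rev, Matrix.mul_inv_rev,
      Matrix.nonsing_inv_nonsing_inv _ hCd]
    noncomm_ring
  have hterm2 : ((B 1 2)⁻¹ - (B 1 3)⁻¹)⁻¹ = u * ((vᵀ)⁻¹ * (x 3)⁻¹ * C * v⁻¹) * uᵀ := by
    rw [hdiff2, sandw2, hinner]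
  -- combine
  rw [hterm1, hterm2, ← Matrix.add_mul, ← Matrix.mul_add]
  have hx2inv : (x 2)⁻¹ = (vᵀ)⁻¹ * v⁻¹ := by
    rw [hx 2 (by norm_num), ← hv, Matrix.mul_inv_rev]
  have hkey : -(x 2)⁻¹ + (vᵀ)⁻¹ * (x 3)⁻¹ * C * v⁻¹ = (vᵀ)⁻¹ * (x 3)⁻¹ * v⁻¹ := by
    have h2 : (x 3)⁻¹ * C = 1 + (x 3)⁻¹ := by
      rw [hCdef, Matrix.mul_add, mul_one, Matrix.nonsing_inv_mul _ (hdetx 3 (by norm_num))]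
      abel
    rw [hx2inv, Matrix.mul_assoc ((vᵀ)⁻¹) ((x 3)⁻¹) C, Matrix.mul_assoc, h2,
      Matrix.add_mul, Matrix.mul_add, Matrix.one_mul, neg_add_cancel_left,
      ← Matrix.mul_assoc]
  rw [hkey]
  simp only [Matrix.mul_assoc]
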